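/- arXiv:1707.09285 — 3 statements merged into one kernel-verified Lean document; each statement's English description precedes it below -/
import Mathlib

section
/- Let A_1, …, A_n̂ be a partition of the nodes of G with partition matrix u, and let γ > 0. Then the ℓ-th entry of the row vector kᵀu equals vol A_ℓ, so that ‖kᵀu‖₂² = Σ_{ℓ=1}^{n̂} (vol A_ℓ)², and the modularity satisfies Q = 1 − (1/(2m)) ( |u|_TV + (γ/(2m)) ‖kᵀu‖₂² ). Consequently, a partition maximizes modularity if and only if its partition matrix minimizes |u|_TV + (γ/(2m)) ‖kᵀu‖₂² over all partition matrices. -/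
open Finset

/-- The volume of a node subset `S`: total degree of its nodes. -/
def graphVol {N : ℕ} (k : Fin N → ℝ) (S : Finset (Fin N)) : ℝ :=
  ∑ i ∈ S, k i

/-- The graph total variation of a function on the nodes. -/
noncomputable def graphTV {N : ℕ} (W : Matrix (Fin N) (Fin N) ℝ) (f : Fin N → ℝ) : ℝ :=
  (1 / 2) * ∑ i, ∑ j, W i j * |f i - f j|

/-- The graph total variation of a matrix: sum of the TVs of its columns. -/
noncomputable def graphTVMat {N n : ℕ} (W : Matrix (Fin N) (Fin N) ℝ)
    (u : Matrix (Fin N) (Fin n) ℝ) : ℝ :=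
  ∑ ℓ, graphTV W (fun i => u i ℓ)

/-- `A` is a partition of the nodes: every node lies in exactly one part. -/
def IsPartition {N n : ℕ} (A : Fin n → Finset (Fin N)) : Prop :=
  ∀ i : Fin N, ∃! ℓ, i ∈ A ℓ

/-- The partition matrix of a partition `A`. -/
def partitionMatrix {N n : ℕ} (A : Fin n → Finset (Fin N)) :
    Matrix (Fin N) (Fin n) ℝ :=
  fun i ℓ => if i ∈ A ℓ then 1 else 0

/-- The modularity of a partition `A` with resolution parameter `γ`. -/
noncomputable def modularity {N n : ℕ} (W : Matrix (Fin N) (Fin N) ℝ) (k : Fin N → ℝ)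
    (twom γ : ℝ) (A : Fin n → Finset (Fin N)) : ℝ :=
  (1 / twom) * ∑ ℓ, ∑ i ∈ A ℓ, ∑ j ∈ A ℓ, (W i j - γ * k i * k j / twom)

/-- The balanced TV functional `|u|_TV + (γ/2m) ‖kᵀu‖₂²`. -/
noncomputable def balancedTV {N n : ℕ} (W : Matrix (Fin N) (Fin N) ℝ) (k : Fin N → ℝ)
    (twom γ : ℝ) (u : Matrix (Fin N) (Fin n) ℝ) : ℝ :=
  graphTVMat W u + (γ / twom) * ∑ ℓ, (∑ i, k i * u i ℓ) ^ 2

lemma pm_row_sum {N n : ℕ} {A : Fin n → Finset (Fin N)} (hA : IsPartition A) (i : Fin N) :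
    ∑ ℓ, partitionMatrix A i ℓ = 1 := by
  obtain ⟨ℓ0, h1, h2⟩ := hA i
  rw [Finset.sum_eq_single ℓ0]
  · simp [partitionMatrix, h1]
  · intro b _ hb
    simp only [partitionMatrix, ite_eq_right_iff]
    intro hmem
    exact absurd (h2 b hmem) hb
  · simp

lemma vol_eq {N n : ℕ} (k : Fin N → ℝ) (A : Fin n → Finset (Fin N)) (ℓ : Fin n) :
    ∑ i, k i * partitionMatrix A i ℓ = graphVol k (A ℓ) := by
  simp [partitionMatrix, graphVol, mul_ite, Finset.sum_ite_mem, Finset.univ_inter]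

lemma habs' {N n : ℕ} (A : Fin n → Finset (Fin N)) (ℓ : Fin n) (i j : Fin N) :
    |partitionMatrix A i ℓ - partitionMatrix A j ℓ|
      = partitionMatrix A i ℓ + partitionMatrix A j ℓ
        - 2 * (partitionMatrix A i ℓ * partitionMatrix A j ℓ) := by
  by_cases h1 : i ∈ A ℓ <;> by_cases h2 : j ∈ A ℓ <;>
    simp [partitionMatrix, h1, h2] <;> norm_num

lemma tv_eq {N n : ℕ} (W : Matrix (Fin N) (Fin N) ℝ) (k : Fin N → ℝ)
    (hk : ∀ i, k i = ∑ j, W i j) (twom : ℝ) (htwom : twom = ∑ i, k i)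
    {A : Fin n → Finset (Fin N)} (hA : IsPartition A) :
    graphTVMat W (partitionMatrix A) = twom - ∑ ℓ, ∑ i ∈ A ℓ, ∑ j ∈ A ℓ, W i j := by
  have S1 : ∑ ℓ, ∑ i, ∑ j, W i j * partitionMatrix A i ℓ = twom := by
    rw [Finset.sum_comm]
    have : ∀ i : Fin N, ∑ ℓ, ∑ j, W i j * partitionMatrix A i ℓ
        = ∑ j, W i j * (∑ ℓ, partitionMatrix A i ℓ) := by
      intro i; rw [Finset.sum_comm]; simp [Finset.mul_sum]
    simp only [this, pm_row_sum hA, mul_one]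
    rw [htwom]; exact Finset.sum_congr rfl fun i _ => (hk i).symm
  have S2 : ∑ ℓ, ∑ i, ∑ j, W i j * partitionMatrix A j ℓ = twom := by
    rw [Finset.sum_comm]
    have : ∀ i : Fin N, ∑ ℓ, ∑ j, W i j * partitionMatrix A j ℓ
        = ∑ j, W i j * (∑ ℓ, partitionMatrix A j ℓ) := by
      intro i; rw [Finset.sum_comm]; simp [Finset.mul_sum]
    simp only [this, pm_row_sum hA, mul_one]
    rw [htwom]; exact Finset.sum_congr rfl fun i _ => (hk i).symm
  have S3 : ∀ ℓ, ∑ i, ∑ j, W i j * (partitionMatrix A i ℓ * partitionMatrix A j ℓ)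
      = ∑ i ∈ A ℓ, ∑ j ∈ A ℓ, W i j := by
    intro ℓ
    simp [partitionMatrix, mul_ite, ite_mul, Finset.sum_ite_mem, Finset.univ_inter]
  have expand : graphTVMat W (partitionMatrix A)
      = (1/2) * ((∑ ℓ, ∑ i, ∑ j, W i j * partitionMatrix A i ℓ)
          + (∑ ℓ, ∑ i, ∑ j, W i j * partitionMatrix A j ℓ))
        - ∑ ℓ, ∑ i, ∑ j, W i j * (partitionMatrix A i ℓ * partitionMatrix A j ℓ) := by
    unfold graphTVMat graphTV
    have key : ∀ ℓ, (1/2 : ℝ) * ∑ i, ∑ j, W i j * |partitionMatrix A i ℓ - partitionMatrix A j ℓ|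
        = (1/2) * ((∑ i, ∑ j, W i j * partitionMatrix A i ℓ)
            + ∑ i, ∑ j, W i j * partitionMatrix A j ℓ)
          - ∑ i, ∑ j, W i j * (partitionMatrix A i ℓ * partitionMatrix A j ℓ) := by
      intro ℓ
      have h2 : ∀ i j : Fin N, W i j * |partitionMatrix A i ℓ - partitionMatrix A j ℓ|
          = W i j * partitionMatrix A i ℓ + W i j * partitionMatrix A j ℓ
            - 2 * (W i j * (partitionMatrix A i ℓ * partitionMatrix A j ℓ)) := by
        intro i j; rw [habs']; ring
      simp only [h2, Finset.sum_add_distrib, Finset.sum_sub_distrib, ← Finset.mul_sum]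
      ring
    simp only [key, Finset.sum_sub_distrib, Finset.sum_add_distrib, ← Finset.mul_sum, mul_add]
  rw [expand, S1, S2, Finset.sum_congr rfl fun ℓ _ => S3 ℓ]
  ring

lemma ksq_eq {N n : ℕ} (k : Fin N → ℝ) (A : Fin n → Finset (Fin N)) :
    ∑ ℓ, (∑ i, k i * partitionMatrix A i ℓ) ^ 2
      = ∑ ℓ, ∑ i ∈ A ℓ, ∑ j ∈ A ℓ, k i * k j := by
  refine Finset.sum_congr rfl fun ℓ _ => ?_
  rw [vol_eq, graphVol, sq, Finset.sum_mul_sum]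

lemma mod_eq {N n : ℕ} (W : Matrix (Fin N) (Fin N) ℝ) (k : Fin N → ℝ)
    (twom γ : ℝ) (htwom0 : twom ≠ 0) (A : Fin n → Finset (Fin N)) :
    modularity W k twom γ A
      = (1 / twom) * ((∑ ℓ, ∑ i ∈ A ℓ, ∑ j ∈ A ℓ, W i j)
          - (γ / twom) * ∑ ℓ, ∑ i ∈ A ℓ, ∑ j ∈ A ℓ, k i * k j) := by
  unfold modularity
  congr 1
  have : ∀ (i j : Fin N), W i j - γ * k i * k j / twom
      = W i j - (γ / twom) * (k i * k j) := by intro i j; ring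
  simp only [this, Finset.sum_sub_distrib, ← Finset.mul_sum]

lemma key_eq {N : ℕ} (W : Matrix (Fin N) (Fin N) ℝ) (k : Fin N → ℝ)
    (hk : ∀ i, k i = ∑ j, W i j) (twom : ℝ) (htwom : twom = ∑ i, k i)
    (htwom_pos : 0 < twom) (γ : ℝ)
    {n : ℕ} (A : Fin n → Finset (Fin N)) (hA : IsPartition A) :
    modularity W k twom γ A = 1 - (1 / twom) * balancedTV W k twom γ (partitionMatrix A) := by
  have h0 : twom ≠ 0 := ne_of_gt htwom_pos
  rw [mod_eq W k twom γ h0, balancedTV, tv_eq W k hk twom htwom hA, ksq_eq]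
  field_simp
  ring

theorem modularity_eq_one_sub_balancedTV
    {N : ℕ} (hN : 1 ≤ N) (W : Matrix (Fin N) (Fin N) ℝ)
    (hWsymm : ∀ i j, W i j = W j i) (hWnonneg : ∀ i j, 0 ≤ W i j)
    (k : Fin N → ℝ) (hk : ∀ i, k i = ∑ j, W i j)
    (twom : ℝ) (htwom : twom = ∑ i, k i) (htwom_pos : 0 < twom)
    (γ : ℝ) (hγ : 0 < γ)
    {nhat : ℕ} (A : Fin nhat → Finset (Fin N)) (hA : IsPartition A) :
    (∀ ℓ, ∑ i, k i * partitionMatrix A i ℓ = graphVol k (A ℓ)) ∧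
    (∑ ℓ, (∑ i, k i * partitionMatrix A i ℓ) ^ 2 = ∑ ℓ, (graphVol k (A ℓ)) ^ 2) ∧
    (modularity W k twom γ A =
      1 - (1 / twom) * balancedTV W k twom γ (partitionMatrix A)) ∧
    ((∀ (n' : ℕ) (A' : Fin n' → Finset (Fin N)), IsPartition A' →
        modularity W k twom γ A' ≤ modularity W k twom γ A) ↔
     (∀ (n' : ℕ) (A' : Fin n' → Finset (Fin N)), IsPartition A' →
        balancedTV W k twom γ (partitionMatrix A) ≤
          balancedTV W k twom γ (partitionMatrix A'))) := by
  have hvol := vol_eq k A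
  refine ⟨hvol, Finset.sum_congr rfl fun ℓ _ => by rw [hvol ℓ],
    key_eq W k hk twom htwom htwom_pos γ A hA, ?_⟩
  have hinv : 0 < 1 / twom := by positivity
  constructor
  · intro h n' A' hA'
    have := h n' A' hA'
    rw [key_eq W k hk twom htwom htwom_pos γ A hA,
      key_eq W k hk twom htwom htwom_pos γ A' hA'] at this
    have := sub_le_sub_left this 1
    simpa using (mul_le_mul_iff_right₀ hinv).mp (by linarith)
  · intro h n' A' hA'
    have := h n' A' hA'
    rw [key_eq W k hk twom htwom htwom_pos γ A hA,
      key_eq W k hk twom htwom htwom_pos γ A' hA']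
    have := mul_le_mul_of_nonneg_left this (le_of_lt hinv)
    linarith
end

section
/- Let γ > 0, M = L + (γ/m) k kᵀ with L = diag(k) − W, and k_max = max_i k_i. Let u₀ ∈ ℝ^N be any vector with ‖u₀‖_∞ ≤ 1 and let u(τ) = exp(−τ M) u₀ (the solution at time τ ≥ 0 of du/dt = −M u with u(0) = u₀). Then ‖u(τ) − u₀‖_∞ ≤ e^{2(γ+1) k_max τ} − 1. -/
open Finset Matrix Nat

lemma my_norm_exp_sub_one_le {𝔸 : Type*} [NormedRing 𝔸] [NormedAlgebra ℝ 𝔸] [CompleteSpace 𝔸]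
    (x : 𝔸) : ‖NormedSpace.exp x - 1‖ ≤ Real.exp ‖x‖ - 1 := by
  have hs : Summable (fun n : ℕ => ((n ! : ℝ)⁻¹) • x ^ n) := NormedSpace.expSeries_summable' x
  have hr : Summable (fun n : ℕ => ‖x‖ ^ n / (n ! : ℝ)) := Real.summable_pow_div_factorial ‖x‖
  have hr1 : Summable (fun n : ℕ => ‖x‖ ^ (n + 1) / ((n + 1)! : ℝ)) :=
    (summable_nat_add_iff 1).mpr hr
  have hb : ∀ n : ℕ, ‖(((n + 1)! : ℝ)⁻¹) • x ^ (n + 1)‖ ≤ ‖x‖ ^ (n + 1) / ((n + 1)! : ℝ) := by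
    intro n
    rw [norm_smul, Real.norm_eq_abs, abs_of_nonneg (by positivity)]
    rw [div_eq_inv_mul]
    exact mul_le_mul_of_nonneg_left (norm_pow_le' x n.succ_pos) (by positivity)
  have hns : Summable (fun n : ℕ => ‖(((n + 1)! : ℝ)⁻¹) • x ^ (n + 1)‖) :=
    Summable.of_nonneg_of_le (fun n => norm_nonneg _) hb hr1
  have hx : NormedSpace.exp x - 1 = ∑' n : ℕ, (((n + 1)! : ℝ)⁻¹) • x ^ (n + 1) := by
    simp only [NormedSpace.exp_eq_tsum ℝ]
    rw [hs.tsum_eq_zero_add]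
    simp
  have hxr : Real.exp ‖x‖ - 1 = ∑' n : ℕ, ‖x‖ ^ (n + 1) / ((n + 1)! : ℝ) := by
    rw [Real.exp_eq_exp_ℝ]
    simp only [NormedSpace.exp_eq_tsum_div]
    rw [hr.tsum_eq_zero_add]
    simp
  rw [hx, hxr]
  exact (norm_tsum_le_tsum_norm hns).trans (hns.tsum_le_tsum hb hr1)

section

attribute [local instance] Matrix.linftyOpNormedRing Matrix.linftyOpNormedAlgebra

theorem diffusion_sup_bound
    {N : ℕ} (hN : 1 ≤ N) (W : Matrix (Fin N) (Fin N) ℝ)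
    (hWsymm : ∀ i j, W i j = W j i) (hWnonneg : ∀ i j, 0 ≤ W i j)
    (k : Fin N → ℝ) (hk : ∀ i, k i = ∑ j, W i j)
    (twom : ℝ) (htwom : twom = ∑ i, k i) (htwom_pos : 0 < twom)
    (m : ℝ) (hm : m = twom / 2)
    (γ : ℝ) (hγ : 0 < γ)
    (L : Matrix (Fin N) (Fin N) ℝ) (hL : L = Matrix.diagonal k - W)
    (M : Matrix (Fin N) (Fin N) ℝ)
    (hM : M = L + (γ / m) • Matrix.of (fun i j => k i * k j))
    (kmax : ℝ) (hkmax : IsGreatest (Set.range k) kmax)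
    (u₀ : Fin N → ℝ) (hu₀ : ∀ i, |u₀ i| ≤ 1)
    (τ : ℝ) (hτ : 0 ≤ τ) :
    ∀ i, |(NormedSpace.exp (-(τ • M))).mulVec u₀ i - u₀ i| ≤
      Real.exp (2 * (γ + 1) * kmax * τ) - 1 := by
  have hk0 : ∀ i, 0 ≤ k i := fun i => (hk i) ▸ Finset.sum_nonneg fun j _ => hWnonneg i j
  have hkmax0 : 0 ≤ kmax := le_trans (hk0 ⟨0, hN⟩) (hkmax.2 ⟨⟨0, hN⟩, rfl⟩)
  have hm0 : 0 < m := by rw [hm]; linarith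
  have h2m : twom = 2 * m := by rw [hm]; ring
  -- row sum bound
  have hrow : ∀ p, ∑ j, |M p j| ≤ 2 * (γ + 1) * kmax := by
    intro p
    have hWpp : W p p ≤ k p := by
      rw [hk]; exact Finset.single_le_sum (fun j _ => hWnonneg p j) (mem_univ p)
    have hLrow : ∑ j, |L p j| ≤ 2 * k p := by
      have herase : ∑ j ∈ univ.erase p, W p j = k p - W p p := by
        have := Finset.sum_erase_add univ (fun j => W p j) (mem_univ p)
        rw [← hk p] at this
        linarith
      calc ∑ j, |L p j|
          = ∑ j ∈ univ.erase p, |L p j| + |L p p| :=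
            (Finset.sum_erase_add _ _ (mem_univ p)).symm
        _ = (∑ j ∈ univ.erase p, W p j) + (k p - W p p) := by
            congr 1
            · refine Finset.sum_congr rfl fun j hj => ?_
              have hjp : j ≠ p := Finset.ne_of_mem_erase hj
              rw [hL]
              simp [Matrix.sub_apply, Matrix.diagonal_apply_ne' k hjp,
                abs_of_nonpos (neg_nonpos.mpr (hWnonneg p j))]
            · rw [hL]
              simp [Matrix.sub_apply, Matrix.diagonal_apply_eq,
                abs_of_nonneg (sub_nonneg.mpr hWpp)]
        _ = 2 * (k p - W p p) := by rw [herase]; ring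
        _ ≤ 2 * k p := by linarith [hWnonneg p p]
    have hb : ∀ j, |M p j| ≤ |L p j| + (γ / m) * (k p * k j) := by
      intro j
      have hMapp : M p j = L p j + (γ / m) * (k p * k j) := by
        rw [hM]; simp [Matrix.add_apply, Matrix.smul_apply]
      rw [hMapp]
      calc |L p j + (γ / m) * (k p * k j)|
          ≤ |L p j| + |(γ / m) * (k p * k j)| := abs_add_le _ _
        _ = |L p j| + (γ / m) * (k p * k j) := by
            rw [abs_of_nonneg (mul_nonneg (div_nonneg hγ.le hm0.le)
              (mul_nonneg (hk0 p) (hk0 j)))]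
    have hkp : k p ≤ kmax := hkmax.2 ⟨p, rfl⟩
    calc ∑ j, |M p j|
        ≤ ∑ j, (|L p j| + (γ / m) * (k p * k j)) := Finset.sum_le_sum fun j _ => hb j
      _ = (∑ j, |L p j|) + (γ / m) * (k p * twom) := by
          rw [Finset.sum_add_distrib, htwom, Finset.mul_sum, Finset.mul_sum]
      _ = (∑ j, |L p j|) + 2 * γ * k p := by
          rw [h2m]; field_simp; try ring
      _ ≤ 2 * k p + 2 * γ * k p := by linarith
      _ = 2 * (γ + 1) * k p := by ring
      _ ≤ 2 * (γ + 1) * kmax := by nlinarith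
  -- operator norm bound
  have hc : (0 : ℝ) ≤ 2 * (γ + 1) * kmax := by positivity
  have hMnorm : ‖M‖ ≤ 2 * (γ + 1) * kmax := by
    have hnn : ‖M‖₊ ≤ (⟨2 * (γ + 1) * kmax, hc⟩ : NNReal) := by
      rw [Matrix.linfty_opNNNorm_def]
      refine Finset.sup_le fun b _ => ?_
      apply NNReal.coe_le_coe.mp
      push_cast
      simp only [Real.norm_eq_abs]
      exact hrow b
    exact_mod_cast hnn
  have hAnorm : ‖-(τ • M)‖ ≤ 2 * (γ + 1) * kmax * τ := by
    rw [norm_neg, norm_smul, Real.norm_eq_abs, abs_of_nonneg hτ]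
    calc τ * ‖M‖ ≤ τ * (2 * (γ + 1) * kmax) := mul_le_mul_of_nonneg_left hMnorm hτ
      _ = 2 * (γ + 1) * kmax * τ := by ring
  have hu : ‖u₀‖ ≤ 1 := by
    refine (pi_norm_le_iff_of_nonneg zero_le_one).mpr fun i => ?_
    simpa [Real.norm_eq_abs] using hu₀ i
  intro i
  calc |(NormedSpace.exp (-(τ • M))).mulVec u₀ i - u₀ i|
      ≤ ‖(NormedSpace.exp (-(τ • M))).mulVec u₀ - u₀‖ := by
        simpa [Real.norm_eq_abs] using
          norm_le_pi_norm ((NormedSpace.exp (-(τ • M))).mulVec u₀ - u₀) i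
    _ = ‖(NormedSpace.exp (-(τ • M)) - 1).mulVec u₀‖ := by
        rw [Matrix.sub_mulVec, Matrix.one_mulVec]
    _ ≤ ‖NormedSpace.exp (-(τ • M)) - 1‖ * ‖u₀‖ := Matrix.linfty_opNorm_mulVec _ _
    _ ≤ (Real.exp ‖-(τ • M)‖ - 1) * 1 :=
        mul_le_mul (my_norm_exp_sub_one_le _) hu (norm_nonneg _)
          (sub_nonneg.mpr (Real.one_le_exp (norm_nonneg _)))
    _ ≤ Real.exp (2 * (γ + 1) * kmax * τ) - 1 := by
        rw [mul_one]
        have := Real.exp_le_exp.mpr hAnorm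
        linarith

end
end

section
/- Let γ > 0, M = L + (γ/m) k kᵀ with L = diag(k) − W, and k_max = max_i k_i > 0. Let v₀ ∈ {−1, 1}^N and let v(τ) = exp(−τ M) v₀. If 0 ≤ τ < (log 2) / (2(γ + 1) k_max), then v(τ)_i has the same (strict) sign as (v₀)_i for every node i: (v₀)_i · v(τ)_i > 0. Consequently, for two communities the MBO thresholding step leaves the partition unchanged (the iteration is stationary) for any timestep below this bound. -/
open Finset Matrix

lemma aux_norm_exp_sub_one_le {A : Type*} [NormedRing A] [NormedAlgebra ℝ A] [CompleteSpace A]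
    (x : A) : ‖NormedSpace.exp x - 1‖ ≤ Real.exp ‖x‖ - 1 := by
  have hs : Summable fun n : ℕ => (Nat.factorial n : ℝ)⁻¹ • x ^ n := NormedSpace.expSeries_summable' x
  have h0 : NormedSpace.exp x = ∑' n : ℕ, (Nat.factorial n : ℝ)⁻¹ • x ^ n := by
    rw [NormedSpace.exp_eq_tsum ℝ]
  rw [h0, hs.tsum_eq_zero_add]
  simp only [Nat.factorial_zero, Nat.cast_one, inv_one, pow_zero, one_smul, add_sub_cancel_left]
  have h1 : HasSum (fun n : ℕ => ‖x‖ ^ n / Nat.factorial n) (Real.exp ‖x‖) := by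
    have := NormedSpace.expSeries_div_hasSum_exp ‖x‖
    rwa [← Real.exp_eq_exp_ℝ] at this
  have hR : HasSum (fun n : ℕ => ‖x‖ ^ (n + 1) / Nat.factorial (n + 1)) (Real.exp ‖x‖ - 1) := by
    have := (hasSum_nat_add_iff' (f := fun n : ℕ => ‖x‖ ^ n / Nat.factorial n) 1).2 h1
    simpa using this
  refine tsum_of_norm_bounded hR fun n => ?_
  rw [norm_smul, norm_inv, Real.norm_natCast, div_eq_inv_mul]
  have h2 : ‖x ^ (n + 1)‖ ≤ ‖x‖ ^ (n + 1) := norm_pow_le' x n.succ_pos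
  have h3 : (0:ℝ) ≤ (Nat.factorial (n + 1) : ℝ)⁻¹ := by positivity
  exact mul_le_mul_of_nonneg_left h2 h3

theorem mbo_stationary_below_timestep_bound
    {N : ℕ} (hN : 1 ≤ N) (W : Matrix (Fin N) (Fin N) ℝ)
    (hWsymm : ∀ i j, W i j = W j i) (hWnonneg : ∀ i j, 0 ≤ W i j)
    (k : Fin N → ℝ) (hk : ∀ i, k i = ∑ j, W i j)
    (twom : ℝ) (htwom : twom = ∑ i, k i) (htwom_pos : 0 < twom)
    (m : ℝ) (hm : m = twom / 2)
    (γ : ℝ) (hγ : 0 < γ)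
    (L : Matrix (Fin N) (Fin N) ℝ) (hL : L = Matrix.diagonal k - W)
    (M : Matrix (Fin N) (Fin N) ℝ)
    (hM : M = L + (γ / m) • Matrix.of (fun i j => k i * k j))
    (kmax : ℝ) (hkmax : IsGreatest (Set.range k) kmax) (hkmax_pos : 0 < kmax)
    (v₀ : Fin N → ℝ) (hv₀ : ∀ i, v₀ i = 1 ∨ v₀ i = -1)
    (τ : ℝ) (hτ : 0 ≤ τ) (hτlt : τ < Real.log 2 / (2 * (γ + 1) * kmax)) :
    ∀ i, 0 < v₀ i * (NormedSpace.exp (-(τ • M))).mulVec v₀ i := by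
  letI : SeminormedRing (Matrix (Fin N) (Fin N) ℝ) := Matrix.linftyOpSemiNormedRing
  letI : NormedRing (Matrix (Fin N) (Fin N) ℝ) := Matrix.linftyOpNormedRing
  letI : NormedAlgebra ℝ (Matrix (Fin N) (Fin N) ℝ) := Matrix.linftyOpNormedAlgebra
  have hm_pos : 0 < m := by rw [hm]; linarith
  have hknn : ∀ i, 0 ≤ k i := fun i => by
    rw [hk i]; exact Finset.sum_nonneg fun j _ => hWnonneg i j
  have hkle : ∀ i, k i ≤ kmax := fun i => hkmax.2 ⟨i, rfl⟩
  have hC : (0:ℝ) < 2 * (γ + 1) * kmax := by positivity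
  -- row sum bound
  have key : ∀ i, ∑ j, |M i j| ≤ 2 * (γ + 1) * kmax := by
    intro i
    have hbd : ∀ j, |M i j| ≤ (Matrix.diagonal k i j + W i j) + (γ / m) * (k i * k j) := by
      intro j
      rw [hM, hL]
      simp only [Matrix.add_apply, Matrix.sub_apply, Matrix.smul_apply, Matrix.of_apply,
        smul_eq_mul]
      have h1 : |Matrix.diagonal k i j - W i j| ≤ Matrix.diagonal k i j + W i j := by
        have hd : 0 ≤ Matrix.diagonal k i j := by
          rcases eq_or_ne i j with h | h
          · simp [h, Matrix.diagonal_apply_eq, hknn j]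
          · simp [Matrix.diagonal_apply_ne _ h]
        have := abs_sub (Matrix.diagonal k i j) (W i j)
        calc |Matrix.diagonal k i j - W i j| ≤ |Matrix.diagonal k i j| + |W i j| :=
              abs_sub _ _
          _ = Matrix.diagonal k i j + W i j := by
              rw [abs_of_nonneg hd, abs_of_nonneg (hWnonneg i j)]
      have h2 : |γ / m * (k i * k j)| = γ / m * (k i * k j) := by
        exact abs_of_nonneg (mul_nonneg (div_nonneg hγ.le hm_pos.le) (mul_nonneg (hknn i) (hknn j)))
      calc |Matrix.diagonal k i j - W i j + γ / m * (k i * k j)|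
          ≤ |Matrix.diagonal k i j - W i j| + |γ / m * (k i * k j)| := abs_add_le _ _
        _ ≤ (Matrix.diagonal k i j + W i j) + γ / m * (k i * k j) := by
            rw [h2]; linarith
    calc ∑ j, |M i j| ≤ ∑ j, ((Matrix.diagonal k i j + W i j) + (γ / m) * (k i * k j)) :=
          Finset.sum_le_sum fun j _ => hbd j
      _ = (∑ j, Matrix.diagonal k i j) + (∑ j, W i j) + (γ / m) * (k i * ∑ j, k j) := by
          rw [Finset.sum_add_distrib, Finset.sum_add_distrib, ← Finset.mul_sum,
            ← Finset.mul_sum]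
      _ = k i + k i + (γ / m) * (k i * twom) := by
          rw [Finset.sum_eq_single i (fun j _ h => Matrix.diagonal_apply_ne' _ h) (by simp),
            Matrix.diagonal_apply_eq, ← hk i, ← htwom]
      _ = 2 * k i + 2 * γ * k i := by
          rw [hm]; field_simp; ring
      _ ≤ 2 * (γ + 1) * kmax := by nlinarith [hkle i, hknn i]
  -- norm bound for M
  have hMnorm : ‖M‖ ≤ 2 * (γ + 1) * kmax := by
    rw [Matrix.linfty_opNorm_def, ← Real.coe_toNNReal (2 * (γ + 1) * kmax) hC.le,
      NNReal.coe_le_coe]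
    apply Finset.sup_le
    intro i _
    rw [← NNReal.coe_le_coe, NNReal.coe_sum, Real.coe_toNNReal _ hC.le]
    simpa [Real.norm_eq_abs] using key i
  set B := -(τ • M) with hB
  have hBnorm : ‖B‖ < Real.log 2 := by
    have h1 : ‖B‖ = τ * ‖M‖ := by
      rw [hB, norm_neg, norm_smul, Real.norm_eq_abs, abs_of_nonneg hτ]
    rw [h1]
    have h2 : τ * ‖M‖ ≤ τ * (2 * (γ + 1) * kmax) :=
      mul_le_mul_of_nonneg_left hMnorm hτ
    have h3 : τ * (2 * (γ + 1) * kmax) < Real.log 2 := by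
      rw [lt_div_iff₀ hC] at hτlt; linarith
    linarith
  have hexp : ‖NormedSpace.exp B - 1‖ < 1 := by
    have h1 := aux_norm_exp_sub_one_le B
    have h2 : Real.exp ‖B‖ < 2 := by
      have := Real.exp_lt_exp.2 hBnorm
      rwa [Real.exp_log (by norm_num)] at this
    exact lt_of_le_of_lt h1 (by linarith)
  have hv₀norm : ‖v₀‖ ≤ 1 := by
    apply pi_norm_le_iff_of_nonneg zero_le_one |>.2
    intro i
    rcases hv₀ i with h | h <;> simp [h, Real.norm_eq_abs]
  have hdiff : ∀ i, |(NormedSpace.exp B).mulVec v₀ i - v₀ i| < 1 := by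
    intro i
    have h1 : (NormedSpace.exp B).mulVec v₀ - v₀ =
        (NormedSpace.exp B - 1).mulVec v₀ := by
      rw [Matrix.sub_mulVec, Matrix.one_mulVec]
    have h2 : ‖(NormedSpace.exp B - 1).mulVec v₀‖ ≤ ‖NormedSpace.exp B - 1‖ * ‖v₀‖ :=
      Matrix.linfty_opNorm_mulVec _ _
    have h3 : |((NormedSpace.exp B).mulVec v₀ - v₀) i| ≤
        ‖(NormedSpace.exp B).mulVec v₀ - v₀‖ := by
      simpa [Real.norm_eq_abs] using norm_le_pi_norm ((NormedSpace.exp B).mulVec v₀ - v₀) i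
    have h4 : ‖NormedSpace.exp B - 1‖ * ‖v₀‖ < 1 := by
      have hnn : (0:ℝ) ≤ ‖NormedSpace.exp B - 1‖ := norm_nonneg _
      nlinarith [norm_nonneg v₀]
    have : |((NormedSpace.exp B).mulVec v₀ - v₀) i| < 1 := by
      rw [h1] at h3 ⊢; exact lt_of_le_of_lt (h3.trans h2) h4
    simpa [Pi.sub_apply] using this
  intro i
  have hd := hdiff i
  rcases abs_lt.1 hd with ⟨hl, hr⟩
  rcases hv₀ i with h | h <;> rw [h] at hl hr ⊢ <;> nlinarith
end
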